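/- Let X be a complete CAT(0) metric space and let G be a group acting on X by isometries. If some orbit G·x is bounded, then G has a fixed point in X. -/
import Mathlib


/-- A metric space is CAT(0) (in the sense of the CN comparison inequality) if
any two points have a midpoint satisfying the CN inequality. -/
def IsCAT0 (X : Type*) [MetricSpace X] : Prop :=
  ∀ x y : X, ∃ m : X, dist x m = dist x y / 2 ∧ dist y m = dist x y / 2 ∧
    ∀ z : X, dist z m ^ 2 ≤ (dist z x ^ 2 + dist z y ^ 2) / 2 - dist x y ^ 2 / 4

/-- Bruhat–Tits fixed point theorem. -/
theorem stmt_3 {X : Type*} [MetricSpace X] [CompleteSpace X] (hX : IsCAT0 X)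
    (G : Type*) [Group G] [MulAction G X]
    (hiso : ∀ g : G, Isometry (fun x : X => g • x))
    (x : X) (hbdd : Bornology.IsBounded (Set.range fun g : G => g • x)) :
    ∃ y : X, ∀ g : G, g • y = y := by
  classical
  have hGne : Nonempty G := ⟨1⟩
  have hXne : Nonempty X := ⟨x⟩
  obtain ⟨C, hC⟩ := hbdd.subset_closedBall x
  have hCx : ∀ g : G, dist (g • x) x ≤ C := by
    intro g
    have := hC ⟨g, rfl⟩
    simpa [Metric.mem_closedBall] using this
  set f : X → ℝ := fun y => ⨆ g : G, dist (g • x) y with hf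
  have hbdd' : ∀ y : X, BddAbove (Set.range fun g : G => dist (g • x) y) := by
    intro y
    refine ⟨C + dist x y, ?_⟩
    rintro _ ⟨g, rfl⟩
    calc dist (g • x) y ≤ dist (g • x) x + dist x y := dist_triangle _ _ _
      _ ≤ C + dist x y := by linarith [hCx g]
  have h_le_f : ∀ (g : G) (y : X), dist (g • x) y ≤ f y := fun g y => le_ciSup (hbdd' y) g
  have h_f_le : ∀ (y : X) (c : ℝ), (∀ g : G, dist (g • x) y ≤ c) → f y ≤ c :=
    fun y c h => ciSup_le h
  have f_nonneg : ∀ y : X, 0 ≤ f y := fun y => le_trans dist_nonneg (h_le_f 1 y)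
  have f_inv : ∀ (g : G) (y : X), f (g • y) = f y := by
    intro g y
    apply le_antisymm
    · apply h_f_le
      intro h
      have : dist (h • x) (g • y) = dist ((g⁻¹ * h) • x) y := by
        rw [← (hiso g⁻¹).dist_eq (h • x) (g • y)]
        simp [smul_smul]
      rw [this]; exact h_le_f _ _
    · apply h_f_le
      intro h
      have : dist (h • x) y = dist ((g * h) • x) (g • y) := by
        rw [← (hiso g).dist_eq (h • x) y]
        simp [smul_smul]
      rw [this]; exact h_le_f _ _
  have f_lip : ∀ y z : X, f y ≤ f z + dist z y := by
    intro y z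
    apply h_f_le
    intro g
    calc dist (g • x) y ≤ dist (g • x) z + dist z y := dist_triangle _ _ _
      _ ≤ f z + dist z y := by linarith [h_le_f g z]
  have hbddb : BddBelow (Set.range f) := ⟨0, by rintro _ ⟨z, rfl⟩; exact f_nonneg z⟩
  set r : ℝ := ⨅ y : X, f y with hr
  have hr_le : ∀ y : X, r ≤ f y := fun y => ciInf_le hbddb y
  have hr0 : 0 ≤ r := le_ciInf f_nonneg
  -- key inequality
  have hkey : ∀ y y' : X, dist y y' ^ 2 / 4 ≤ (f y ^ 2 + f y' ^ 2) / 2 - r ^ 2 := by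
    intro y y'
    obtain ⟨m, _, _, hm⟩ := hX y y'
    set R : ℝ := (f y ^ 2 + f y' ^ 2) / 2 - dist y y' ^ 2 / 4 with hR
    have hzR : ∀ g : G, dist (g • x) m ^ 2 ≤ R := by
      intro g
      have h1 := hm (g • x)
      have h2 : dist (g • x) y ^ 2 ≤ f y ^ 2 :=
        pow_le_pow_left₀ dist_nonneg (h_le_f g y) 2
      have h3 : dist (g • x) y' ^ 2 ≤ f y' ^ 2 :=
        pow_le_pow_left₀ dist_nonneg (h_le_f g y') 2
      rw [hR]; linarith
    have hR0 : 0 ≤ R := le_trans (sq_nonneg _) (hzR 1)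
    have hfm : f m ≤ Real.sqrt R := by
      apply h_f_le
      intro g
      exact (Real.le_sqrt dist_nonneg hR0).mpr (hzR g)
    have hfm2 : f m ^ 2 ≤ R := by
      calc f m ^ 2 ≤ Real.sqrt R ^ 2 := pow_le_pow_left₀ (f_nonneg m) hfm 2
        _ = R := Real.sq_sqrt hR0
    have hrm : r ^ 2 ≤ f m ^ 2 := pow_le_pow_left₀ hr0 (hr_le m) 2
    rw [hR] at hfm2
    linarith
  -- approximate minimizers
  have hexists : ∀ n : ℕ, ∃ y : X, f y < r + 1 / ((n : ℝ) + 1) := by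
    intro n
    apply exists_lt_of_ciInf_lt
    rw [← hr]
    have : (0 : ℝ) < 1 / ((n : ℝ) + 1) := by positivity
    linarith
  choose u hu using hexists
  have hu2 : ∀ n : ℕ, f (u n) ^ 2 ≤ r ^ 2 + (2 * r + 1) * (1 / ((n : ℝ) + 1)) := by
    intro n
    have h1 : f (u n) ≤ r + 1 / ((n : ℝ) + 1) := (hu n).le
    have h2 : (0 : ℝ) < 1 / ((n : ℝ) + 1) := by positivity
    have h3 : 1 / ((n : ℝ) + 1) ≤ 1 := by
      rw [div_le_one (by positivity)]
      linarith [Nat.cast_nonneg (α := ℝ) n]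
    have h4 : f (u n) ^ 2 ≤ (r + 1 / ((n : ℝ) + 1)) ^ 2 :=
      pow_le_pow_left₀ (f_nonneg _) h1 2
    nlinarith
  have hdist2 : ∀ n N : ℕ, N ≤ n →
      dist (u n) (u N) ^ 2 ≤ (8 * r + 4) * (1 / ((N : ℝ) + 1)) := by
    intro n N hn
    have h1 := hkey (u n) (u N)
    have h2 := hu2 n
    have h3 := hu2 N
    have h4 : 1 / ((n : ℝ) + 1) ≤ 1 / ((N : ℝ) + 1) := by
      apply one_div_le_one_div_of_le (by positivity)
      have := Nat.cast_le (α := ℝ).mpr hn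
      linarith
    have h5 : (0 : ℝ) ≤ 2 * r + 1 := by linarith
    nlinarith
  have hCauchy : CauchySeq u := by
    rw [Metric.cauchySeq_iff']
    intro ε hε
    obtain ⟨N, hN⟩ := exists_nat_gt ((8 * r + 4) / ε ^ 2)
    refine ⟨N, fun n hn => ?_⟩
    have h1 := hdist2 n N hn
    have h2 : (8 * r + 4) * (1 / ((N : ℝ) + 1)) < ε ^ 2 := by
      rw [div_lt_iff₀ (by positivity : (0:ℝ) < ε ^ 2)] at hN
      rw [mul_one_div, div_lt_iff₀ (by positivity : (0:ℝ) < (N : ℝ) + 1)]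
      nlinarith
    have h3 : dist (u n) (u N) ^ 2 < ε ^ 2 := lt_of_le_of_lt h1 h2
    exact lt_of_pow_lt_pow_left₀ 2 hε.le h3
  obtain ⟨y, hy⟩ := cauchySeq_tendsto_of_complete hCauchy
  have hfy : f y = r := by
    have hge : r ≤ f y := hr_le y
    have hle : f y ≤ r := by
      have hlim : Filter.Tendsto (fun n : ℕ => r + 1 / ((n : ℝ) + 1) + dist (u n) y)
          Filter.atTop (nhds r) := by
        have t1 : Filter.Tendsto (fun n : ℕ => 1 / ((n : ℝ) + 1)) Filter.atTop (nhds 0) :=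
          tendsto_one_div_add_atTop_nhds_zero_nat
        have t2 : Filter.Tendsto (fun n : ℕ => dist (u n) y) Filter.atTop (nhds 0) :=
          tendsto_iff_dist_tendsto_zero.mp hy
        have := (tendsto_const_nhds (x := r) (f := Filter.atTop (α := ℕ))).add t1 |>.add t2
        simpa using this
      apply ge_of_tendsto' hlim
      intro n
      calc f y ≤ f (u n) + dist (u n) y := f_lip y (u n)
        _ ≤ r + 1 / ((n : ℝ) + 1) + dist (u n) y := by linarith [(hu n).le]
    linarith
  refine ⟨y, fun g => ?_⟩
  have h1 : f (g • y) = r := by rw [f_inv g y, hfy]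
  have h2 := hkey (g • y) y
  rw [h1, hfy] at h2
  have h3 : dist (g • y) y ^ 2 ≤ 0 := by linarith
  have h4 : dist (g • y) y = 0 := by nlinarith [sq_nonneg (dist (g • y) y), dist_nonneg (x := g • y) (y := y)]
  exact dist_eq_zero.mp h4
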